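/- Deterministic degree bounds: in the DCMM model, under Assumption 1(a) (min_k Σ_i θ_i π_i(k) ≥ c_1‖θ‖_1), the unit-diagonal property of P, and Assumption 2(e) (‖P‖_max ≤ c_9), there are constants c, C, C' > 0 such that for every i ∈ [n]: c n θ̄ θ_i ≤ Σ_{j=1}^n H_{ij} ≤ C n θ̄ θ_i; consequently D_0(i,i) ≥ C'·(n θ̄ θ_i + n θ̄²) ≥ C' max{n θ̄ θ_i, n θ̄²}. Moreover ‖H‖ ≍ K^{−1}‖θ‖_2², and ‖H_{i,·}‖_2 ≤ C √n θ_max θ_i. -/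

import Mathlib

noncomputable section

open Matrix MeasureTheory Filter Finset Asymptotics
open scoped BigOperators Topology

namespace DCMM

/-- Euclidean dot product on `Fin m → ℝ`. -/
def dot {m : ℕ} (v w : Fin m → ℝ) : ℝ := ∑ x, v x * w x

/-- Squared Euclidean norm. -/
def sqnorm {m : ℕ} (v : Fin m → ℝ) : ℝ := ∑ x, v x ^ 2

/-- Euclidean norm. -/
def enorm {m : ℕ} (v : Fin m → ℝ) : ℝ := Real.sqrt (sqnorm v)

/-- Supremum (ℓ^∞) norm. -/
def supNorm {m : ℕ} (v : Fin m → ℝ) : ℝ := ⨆ x, |v x|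

/-- Operator (spectral) norm of a real matrix. -/
def opNorm {m k : ℕ} (A : Matrix (Fin m) (Fin k) ℝ) : ℝ :=
  sSup ((fun v => enorm (A.mulVec v)) '' {v | sqnorm v ≤ 1})

/-- The regularized degree `(e_i + n⁻¹ 1_n)ᵀ A 1_n`. -/
def degOf {n : ℕ} (A : Matrix (Fin n) (Fin n) ℝ) (i : Fin n) : ℝ :=
  (∑ j, A i j) + (1 / (n : ℝ)) * ∑ k, ∑ j, A k j

/-- The regularized graph Laplacian `D^{-1/2} A D^{-1/2}`. -/
def laplOf {n : ℕ} (A : Matrix (Fin n) (Fin n) ℝ) : Matrix (Fin n) (Fin n) ℝ :=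
  Matrix.diagonal (fun i => (Real.sqrt (degOf A i))⁻¹) * A *
    Matrix.diagonal (fun i => (Real.sqrt (degOf A i))⁻¹)

/-- A degree–corrected mixed membership (DCMM) model with `n` nodes and `K` communities. -/
structure Model (n K : ℕ) where
  θ : Fin n → ℝ
  Pi : Matrix (Fin n) (Fin K) ℝ
  P : Matrix (Fin K) (Fin K) ℝ
  θ_pos : ∀ i, 0 < θ i
  Pi_nonneg : ∀ i k, 0 ≤ Pi i k
  Pi_rowsum : ∀ i, ∑ k, Pi i k = 1
  P_symm : P.IsSymm
  P_nonneg : ∀ a b, 0 ≤ P a b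
  P_unitdiag : ∀ a, P a a = 1
  P_nonsing : IsUnit P.det
  H_nonneg : ∀ i j, 0 ≤ (Matrix.diagonal θ * Pi * P * Piᵀ * Matrix.diagonal θ) i j
  H_le_one : ∀ i j, (Matrix.diagonal θ * Pi * P * Piᵀ * Matrix.diagonal θ) i j ≤ 1

namespace Model

variable {n K : ℕ} (M : Model n K)

/-- The edge probability matrix `H = Θ Π P Πᵀ Θ`. -/
def H : Matrix (Fin n) (Fin n) ℝ :=
  Matrix.diagonal M.θ * M.Pi * M.P * M.Piᵀ * Matrix.diagonal M.θ

/-- Average degree parameter. -/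
def θbar : ℝ := (∑ i, M.θ i) / n

def θmax : ℝ := ⨆ i, M.θ i

def θmin : ℝ := ⨅ i, M.θ i

/-- The population regularized degrees `D₀(i,i)`. -/
def deg : Fin n → ℝ := degOf M.H

/-- The population regularized Laplacian `L₀`. -/
def L0 : Matrix (Fin n) (Fin n) ℝ := laplOf M.H

/-- Node `i` is a pure node of community `k`. -/
def pure (i : Fin n) (k : Fin K) : Prop := ∀ l, M.Pi i l = if l = k then 1 else 0

/-- `θ_{k,min}`: the smallest degree parameter among pure nodes of community `k`. -/
def θpureMin (k : Fin K) : ℝ := sInf {x | ∃ i, M.pure i k ∧ x = M.θ i}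

/-- The community balance matrix `G = K Πᵀ Θ D₀⁻¹ Θ Π`. -/
def G : Matrix (Fin K) (Fin K) ℝ :=
  (K : ℝ) • (M.Piᵀ * Matrix.diagonal M.θ * Matrix.diagonal (fun i => (M.deg i)⁻¹) *
    Matrix.diagonal M.θ * M.Pi)

/-- The balance matrix `F = K ‖θ‖⁻² Πᵀ Θ² Π`. -/
def F : Matrix (Fin K) (Fin K) ℝ :=
  ((K : ℝ) / (∑ i, M.θ i ^ 2)) • (M.Piᵀ * Matrix.diagonal M.θ * Matrix.diagonal M.θ * M.Pi)

end Model

/-- `lam`, `xi` is a system of unit eigenvalue/eigenvector pairs of `L`,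
ordered decreasingly in magnitude. -/
structure IsEigen {n K : ℕ} (L : Matrix (Fin n) (Fin n) ℝ)
    (lam : Fin K → ℝ) (xi : Fin K → Fin n → ℝ) : Prop where
  eig : ∀ k, L.mulVec (xi k) = lam k • xi k
  unit : ∀ k, sqnorm (xi k) = 1
  orth : ∀ k l, k ≠ l → dot (xi k) (xi l) = 0
  ordered : ∀ k l, k ≤ l → |lam l| ≤ |lam k|

/-- Assumptions 1 and 2 of the paper (the fixed-`n` parts), with constants `c1, …, c9`. -/
structure Assm {n K : ℕ} (M : Model n K) (lam : Fin K → ℝ) (xi : Fin K → Fin n → ℝ)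
    (lamPG eta1 : Fin K → ℝ) (c1 c2 c3 c4 c5 c6 c7 c8 c9 : ℝ) : Prop where
  eigen : IsEigen M.L0 lam xi
  xi1_pos : ∀ h0 : 0 < K, ∀ i, 0 < xi ⟨0, h0⟩ i
  pg_eigen : ∀ k, ∃ v : Fin K → ℝ, v ≠ 0 ∧ (M.P * M.G).mulVec v = lamPG k • v
  pg_ordered : ∀ k l : Fin K, k ≤ l → |lamPG l| ≤ |lamPG k|
  G_norm : opNorm M.G ≤ c1
  Ginv_norm : opNorm M.G⁻¹ ≤ c1
  balance : ∀ k, c1 * (∑ i, M.θ i) ≤ ∑ i, M.θ i * M.Pi i k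
  pg_gap : ∀ h0 : 0 < K, ∀ k, k ≠ (⟨0, h0⟩ : Fin K) →
    lamPG k ≤ min ((1 - c2) * lamPG ⟨0, h0⟩) (c2⁻¹ * Real.sqrt K)
  eta1_eig : ∀ h0 : 0 < K, (M.P * M.G).mulVec eta1 = lamPG ⟨0, h0⟩ • eta1
  eta1_pos : ∀ k, 0 < eta1 k
  eta1_bal : ∀ k l, c3 * eta1 l ≤ eta1 k
  pure_exists : ∀ k, ∃ i, M.pure i k
  lam_gap : ∀ k l, l ≠ k → c4 * |lam k| ≤ |lam k - lam l|
  lamK_large : ∀ h : K - 1 < K,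
    Real.sqrt (Real.log n / (n * M.θbar ^ 2)) ≤ lam ⟨K - 1, h⟩
  F_norm : opNorm M.F ≤ c5
  Finv_norm : opNorm M.F⁻¹ ≤ c6
  θ_low : ∀ i, c7 * Real.sqrt (Real.log n / n) ≤ M.θ i
  θ_up : ∀ i, M.θ i ≤ c8
  P_max : ∀ a b, M.P a b ≤ c9

/-- `X` is a random adjacency matrix generated from the DCMM model `M`:
symmetric, Bernoulli entries with success probabilities `H i j`,
independent on and above the diagonal. -/
structure IsAdj {n K : ℕ} (M : Model n K) {Ω : Type} [MeasurableSpace Ω]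
    (μ : Measure Ω) (X : Ω → Matrix (Fin n) (Fin n) ℝ) : Prop where
  meas : ∀ i j, Measurable fun ω => X ω i j
  symm : ∀ ω, (X ω).IsSymm
  zero_one : ∀ ω i j, X ω i j = 0 ∨ X ω i j = 1
  bern : ∀ i j, μ {ω | X ω i j = 1} = ENNReal.ofReal (M.H i j)
  indep : ProbabilityTheory.iIndepFun
    (fun (p : {p : Fin n × Fin n // p.1 ≤ p.2}) ω => X ω p.1.1 p.1.2) μ

/-- Entrywise eigenvector ratios `r_i = (ξ₂(i)/ξ₁(i), …, ξ_K(i)/ξ₁(i))`. -/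
def ratioOf {n K : ℕ} (xi : Fin K → Fin n → ℝ) (i : Fin n) (j : Fin (K - 1)) : ℝ :=
  xi ⟨(j : ℕ) + 1, by have := j.isLt; omega⟩ i / xi ⟨0, by have := j.isLt; omega⟩ i

/-- A run of the modified successive projection vertex-hunting algorithm (Algorithm 2)
on inputs `rhat` with radius `φ`. -/
structure SPRun {n K : ℕ} (rhat : Fin n → Fin (K - 1) → ℝ) (φ : ℝ) where
  Z : Fin (K + 1) → Fin n → Fin K → ℝ
  isel : Fin K → Fin n
  Chat : Fin K → Finset (Fin n)
  vhat : Fin K → Fin (K - 1) → ℝ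
  Z_init : ∀ i (j : Fin K), Z 0 i j =
    if _ : (j : ℕ) = 0 then 1 else rhat i ⟨(j : ℕ) - 1, by have := j.isLt; omega⟩
  isel_max : ∀ (k : Fin K) (i : Fin n),
    enorm (Z k.castSucc i) ≤ enorm (Z k.castSucc (isel k))
  Z_update : ∀ (k : Fin K) (i : Fin n) (j : Fin K),
    Z k.succ i j = Z k.castSucc i j -
      dot (Z k.castSucc (isel k)) (Z k.castSucc i) / sqnorm (Z k.castSucc (isel k)) *
        Z k.castSucc (isel k) j
  Chat_mem : ∀ (k : Fin K) (i : Fin n),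
    i ∈ Chat k ↔ enorm (fun j => rhat i j - rhat (isel k) j) ≤ φ
  vhat_def : ∀ (k : Fin K) (j : Fin (K - 1)),
    vhat k j = (∑ i ∈ Chat k, rhat i j) / (Chat k).card

/-- `b̂₁(k) = (λ̂₁ + v̂_kᵀ Λ̂₋₁ v̂_k)^{-1/2}`. -/
def b1Of {K : ℕ} (hK : 0 < K) (lam : Fin K → ℝ) (v : Fin (K - 1) → ℝ) : ℝ :=
  (Real.sqrt (lam ⟨0, hK⟩ +
    ∑ j : Fin (K - 1), lam ⟨(j : ℕ) + 1, by have := j.isLt; omega⟩ * v j ^ 2))⁻¹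

/-- The matrix `Q̂` whose `k`-th row is `(1, v̂_kᵀ)`. -/
def QhatOf {K : ℕ} (vhat : Fin K → Fin (K - 1) → ℝ) : Matrix (Fin K) (Fin K) ℝ :=
  fun k j => if _ : (j : ℕ) = 0 then 1 else vhat k ⟨(j : ℕ) - 1, by have := j.isLt; omega⟩

/-- The estimator `P̂ = diag(b̂₁) Q̂ Λ̂ Q̂ᵀ diag(b̂₁)` of Algorithm 1. -/
def PhatOf {K : ℕ} (hK : 0 < K) (lamHat : Fin K → ℝ) (vhat : Fin K → Fin (K - 1) → ℝ) :
    Matrix (Fin K) (Fin K) ℝ :=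
  fun a b => b1Of hK lamHat (vhat a) *
    (∑ k, QhatOf vhat a k * lamHat k * QhatOf vhat b k) * b1Of hK lamHat (vhat b)

/-- The membership estimate `π̂_i` of Algorithm 1, built from the barycentric
coordinates `what` of the embedded nodes. -/
def piHatOf {n K : ℕ} (hK : 0 < K) (lamHat : Fin K → ℝ) (vhat : Fin K → Fin (K - 1) → ℝ)
    (what : Fin n → Fin K → ℝ) (i : Fin n) (k : Fin K) : ℝ :=
  max (what i k / b1Of hK lamHat (vhat k)) 0 /
    ∑ l, max (what i l / b1Of hK lamHat (vhat l)) 0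

/-- The estimator `Θ̂(i,i) = ξ̂₁(i) D̂(i,i)^{1/2} (π̂_iᵀ b̂₁)⁻¹` of Algorithm 1. -/
def thetaHatOf {n K : ℕ} (hK : 0 < K) (A : Matrix (Fin n) (Fin n) ℝ)
    (lamHat : Fin K → ℝ) (xiHat : Fin K → Fin n → ℝ) (vhat : Fin K → Fin (K - 1) → ℝ)
    (what : Fin n → Fin K → ℝ) (i : Fin n) : ℝ :=
  xiHat ⟨0, hK⟩ i * Real.sqrt (degOf A i) *
    (∑ k, piHatOf hK lamHat vhat what i k * b1Of hK lamHat (vhat k))⁻¹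

/-- `Δ_r`: the minimal separation between a non-pure node embedding and a vertex. -/
def DeltaR {n K : ℕ} (M : Model n K) (xi : Fin K → Fin n → ℝ)
    (v : Fin K → Fin (K - 1) → ℝ) : ℝ :=
  sInf {x | ∃ k i, ¬ M.pure i k ∧ x = enorm (fun j => ratioOf xi i j - v k j)}

/-- `ν_n = min{K^{-1/2} λ₁, λ_K}`. -/
def nuOf {K : ℕ} (hK : 0 < K) (lam : Fin K → ℝ) : ℝ :=
  min (lam ⟨0, hK⟩ / Real.sqrt K) (lam ⟨K - 1, by omega⟩)

/-- Index type of the (weakly) upper triangular entries of an `n × n` matrix. -/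
def upperPairs (n : ℕ) : Type := {p : Fin n × Fin n // p.1 ≤ p.2}

instance (n : ℕ) : Fintype (upperPairs n) := by unfold upperPairs; infer_instance
instance (n : ℕ) : DecidableEq (upperPairs n) := by unfold upperPairs; infer_instance

/-- The symmetric 0/1 matrix determined by a selection of upper-triangular entries. -/
def matOfSel {n : ℕ} (s : upperPairs n → Bool) : Matrix (Fin n) (Fin n) ℝ :=
  fun i j => if h : i ≤ j then (if s ⟨(i, j), h⟩ then 1 else 0)
    else (if s ⟨(j, i), le_of_not_ge h⟩ then 1 else 0)

/-- The probability that the DCMM adjacency matrix equals `matOfSel s`. -/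
def selProb {n K : ℕ} (M : Model n K) (s : upperPairs n → Bool) : ℝ :=
  ∏ p : upperPairs n, (if s p then M.H p.1.1 p.1.2 else 1 - M.H p.1.1 p.1.2)

/-- The risk `E |T(X) - target|` of the estimator `T` under the model `M`. -/
def risk {n K : ℕ} (M : Model n K) (T : Matrix (Fin n) (Fin n) ℝ → ℝ) (target : ℝ) : ℝ :=
  ∑ s : upperPairs n → Bool, selProb M s * |T (matOfSel s) - target|

/-- The noise matrix `W = X - H`. -/
def Wof {n K : ℕ} (M : Model n K) (A : Matrix (Fin n) (Fin n) ℝ) :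
    Matrix (Fin n) (Fin n) ℝ := A - M.H

/-- `Σ_j W_{ij} + n⁻¹ Σ_l Σ_m W_{lm}`. -/
def wsum {n K : ℕ} (M : Model n K) (A : Matrix (Fin n) (Fin n) ℝ) (i : Fin n) : ℝ :=
  (∑ j, Wof M A i j) + (1 / (n : ℝ)) * ∑ l, ∑ m, Wof M A l m

/-- First-order term of the Taylor expansion of `D̂^{-1/2}`. -/
def Delta1 {n K : ℕ} (M : Model n K) (A : Matrix (Fin n) (Fin n) ℝ) :
    Matrix (Fin n) (Fin n) ℝ :=
  Matrix.diagonal fun i => -(1 / 2) * wsum M A i / Real.sqrt (M.deg i) ^ 3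

/-- Second-order term of the Taylor expansion of `D̂^{-1/2}`. -/
def Delta2 {n K : ℕ} (M : Model n K) (A : Matrix (Fin n) (Fin n) ℝ) :
    Matrix (Fin n) (Fin n) ℝ :=
  Matrix.diagonal fun i => (3 / 4) * wsum M A i ^ 2 / Real.sqrt (M.deg i) ^ 5

/-- `D₀^{-1/2}` as a diagonal matrix. -/
def Dhalfinv {n K : ℕ} (M : Model n K) : Matrix (Fin n) (Fin n) ℝ :=
  Matrix.diagonal fun i => (Real.sqrt (M.deg i))⁻¹

/-- The Laplacian noise `E = L̂ - L₀`. -/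
def Emat {n K : ℕ} (M : Model n K) (A : Matrix (Fin n) (Fin n) ℝ) :
    Matrix (Fin n) (Fin n) ℝ := laplOf A - M.L0

/-- The first-order expansion `E₁` of the Laplacian noise. -/
def E1mat {n K : ℕ} (M : Model n K) (A : Matrix (Fin n) (Fin n) ℝ) :
    Matrix (Fin n) (Fin n) ℝ :=
  Dhalfinv M * Wof M A * Dhalfinv M + Delta1 M A * M.H * Dhalfinv M +
    Dhalfinv M * M.H * Delta1 M A

/-- The second-order expansion `E₂` of the Laplacian noise. -/
def E2mat {n K : ℕ} (M : Model n K) (A : Matrix (Fin n) (Fin n) ℝ) :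
    Matrix (Fin n) (Fin n) ℝ :=
  Delta2 M A * M.H * Dhalfinv M + Delta1 M A * Wof M A * Dhalfinv M +
    Delta1 M A * M.H * Delta1 M A + Dhalfinv M * Wof M A * Delta1 M A +
    Dhalfinv M * M.H * Delta2 M A


section AuxS13
variable {n K : ℕ} (θ : Fin n → ℝ) (Pi : Matrix (Fin n) (Fin K) ℝ) (P : Matrix (Fin K) (Fin K) ℝ)

lemma Hentry' (i j : Fin n) :
    (Matrix.diagonal θ * Pi * P * Piᵀ * Matrix.diagonal θ) i j
      = θ i * θ j * ∑ k, ∑ l, Pi i k * P k l * Pi j l := by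
  simp [Matrix.mul_apply, Matrix.diagonal_apply, Matrix.transpose_apply,
    Finset.sum_mul, Finset.mul_sum]
  rw [Finset.sum_comm]
  exact Finset.sum_congr rfl fun k _ => Finset.sum_congr rfl fun l _ => by ring

variable (hPi : ∀ i k, 0 ≤ Pi i k) (hrow : ∀ i, ∑ k, Pi i k = 1)
  (hPn : ∀ a b, 0 ≤ P a b)

include hPi hPn in
lemma S_nonneg' (i j : Fin n) : 0 ≤ ∑ k, ∑ l, Pi i k * P k l * Pi j l :=
  Finset.sum_nonneg fun k _ => Finset.sum_nonneg fun l _ =>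
    mul_nonneg (mul_nonneg (hPi i k) (hPn k l)) (hPi j l)

include hPi hrow in
lemma S_le' {c9 : ℝ} (hP : ∀ a b, P a b ≤ c9) (i j : Fin n) :
    ∑ k, ∑ l, Pi i k * P k l * Pi j l ≤ c9 := by
  have h1 : ∑ k, ∑ l, Pi i k * P k l * Pi j l ≤ ∑ k, ∑ l, Pi i k * c9 * Pi j l := by
    refine Finset.sum_le_sum fun k _ => Finset.sum_le_sum fun l _ => ?_
    exact mul_le_mul_of_nonneg_right
      (mul_le_mul_of_nonneg_left (hP k l) (hPi i k)) (hPi j l)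
  refine h1.trans_eq ?_
  have h2 : ∀ k, ∑ l, Pi i k * c9 * Pi j l = Pi i k * c9 := by
    intro k; rw [← Finset.mul_sum, hrow j, mul_one]
  rw [Finset.sum_congr rfl fun k _ => h2 k, ← Finset.sum_mul, hrow i, one_mul]

include hPi hPn in
lemma S_diag_le' (hdiag : ∀ a, P a a = 1) (i j : Fin n) :
    ∑ k, Pi i k * Pi j k ≤ ∑ k, ∑ l, Pi i k * P k l * Pi j l := by
  refine Finset.sum_le_sum fun k _ => ?_
  have h : Pi i k * Pi j k = Pi i k * P k k * Pi j k := by rw [hdiag k]; ring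
  rw [h]
  exact Finset.single_le_sum (f := fun l => Pi i k * P k l * Pi j l)
    (fun l _ => mul_nonneg (mul_nonneg (hPi i k) (hPn k l)) (hPi j l)) (Finset.mem_univ k)

end AuxS13

/-- parts of Lemma A.4: deterministic bounds on degrees and on `H`. -/
theorem statement_13 (c1 c9 : ℝ) (hc1 : 0 < c1) (hc9 : 0 < c9) :
    ∃ c C C' Cl Cu : ℝ, 0 < c ∧ 0 < C ∧ 0 < C' ∧ 0 < Cl ∧ 0 < Cu ∧
      ∀ (n K : ℕ) (hK : 0 < K) (M : Model n K),
        -- Assumption 1(a)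
        opNorm M.G ≤ c1 → opNorm M.G⁻¹ ≤ c1 →
        (∀ k, c1 * (∑ i, M.θ i) ≤ ∑ i, M.θ i * M.Pi i k) →
        -- Assumption 2(e)
        (∀ a b, M.P a b ≤ c9) →
        (∀ i : Fin n,
          c * (n * M.θbar * M.θ i) ≤ ∑ j, M.H i j ∧
          (∑ j, M.H i j) ≤ C * (n * M.θbar * M.θ i) ∧
          C' * (n * M.θbar * M.θ i + n * M.θbar ^ 2) ≤ M.deg i ∧
          C' * max (n * M.θbar * M.θ i) (n * M.θbar ^ 2) ≤ M.deg i ∧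
          enorm (fun j => M.H i j) ≤ C * Real.sqrt n * M.θmax * M.θ i) ∧
        (Cl * ((∑ i, M.θ i ^ 2) / K) ≤ opNorm M.H ∧
          opNorm M.H ≤ Cu * ((∑ i, M.θ i ^ 2) / K)) := by
  refine ⟨c1, c9, c1, 1, c9 / c1, hc1, hc9, hc1, one_pos, by positivity, ?_⟩
  intro n K hK M hG hGinv hbal hP
  have hθ : ∀ i, 0 < M.θ i := M.θ_pos
  set T : ℝ := ∑ i, M.θ i with hT
  set T2 : ℝ := ∑ i, M.θ i ^ 2 with hT2def
  have hT0 : 0 ≤ T := Finset.sum_nonneg fun i _ => (hθ i).le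
  have hT20 : 0 ≤ T2 := Finset.sum_nonneg fun i _ => by positivity
  have hHe : ∀ i j, M.H i j
      = M.θ i * M.θ j * ∑ k, ∑ l, M.Pi i k * M.P k l * M.Pi j l :=
    fun i j => Hentry' M.θ M.Pi M.P i j
  have hS0 : ∀ i j, 0 ≤ ∑ k, ∑ l, M.Pi i k * M.P k l * M.Pi j l :=
    S_nonneg' M.Pi M.P M.Pi_nonneg M.P_nonneg
  have hS9 : ∀ i j, (∑ k, ∑ l, M.Pi i k * M.P k l * M.Pi j l) ≤ c9 :=
    S_le' M.Pi M.P M.Pi_nonneg M.Pi_rowsum hP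
  have hSd : ∀ i j, (∑ k, M.Pi i k * M.Pi j k)
      ≤ ∑ k, ∑ l, M.Pi i k * M.P k l * M.Pi j l :=
    S_diag_le' M.Pi M.P M.Pi_nonneg M.P_nonneg M.P_unitdiag
  have hH0 : ∀ i j, 0 ≤ M.H i j := M.H_nonneg
  have hHub : ∀ i j, M.H i j ≤ c9 * (M.θ i * M.θ j) := by
    intro i j
    rw [hHe i j]
    have := mul_le_mul_of_nonneg_left (hS9 i j)
      (mul_nonneg (hθ i).le (hθ j).le)
    linarith
  have hrow_up : ∀ i, (∑ j, M.H i j) ≤ c9 * (T * M.θ i) := by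
    intro i
    calc ∑ j, M.H i j ≤ ∑ j, c9 * (M.θ i * M.θ j) :=
          Finset.sum_le_sum fun j _ => hHub i j
      _ = c9 * (T * M.θ i) := by
          rw [show (∑ j, c9 * (M.θ i * M.θ j)) = c9 * M.θ i * ∑ j, M.θ j by
            rw [mul_assoc, ← Finset.mul_sum, ← Finset.mul_sum]]
          ring
  have hrow_lo : ∀ i, c1 * (T * M.θ i) ≤ ∑ j, M.H i j := by
    intro i
    have h1 : ∀ j, M.θ i * M.θ j * ∑ k, M.Pi i k * M.Pi j k ≤ M.H i j := by
      intro j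
      rw [hHe i j]
      exact mul_le_mul_of_nonneg_left (hSd i j) (mul_nonneg (hθ i).le (hθ j).le)
    have e1 : ∑ k, M.θ i * M.Pi i k * (c1 * T) = c1 * (T * M.θ i) := by
      rw [← Finset.sum_mul, ← Finset.mul_sum, M.Pi_rowsum i]; ring
    have e2 : ∑ k, M.θ i * M.Pi i k * ∑ j, M.θ j * M.Pi j k
        = ∑ j, M.θ i * M.θ j * ∑ k, M.Pi i k * M.Pi j k := by
      simp only [Finset.mul_sum]
      rw [Finset.sum_comm]
      exact Finset.sum_congr rfl fun j _ => Finset.sum_congr rfl fun k _ => by ring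
    calc c1 * (T * M.θ i) = ∑ k, M.θ i * M.Pi i k * (c1 * T) := e1.symm
      _ ≤ ∑ k, M.θ i * M.Pi i k * ∑ j, M.θ j * M.Pi j k :=
          Finset.sum_le_sum fun k _ => mul_le_mul_of_nonneg_left (hbal k)
            (mul_nonneg (hθ i).le (M.Pi_nonneg i k))
      _ = ∑ j, M.θ i * M.θ j * ∑ k, M.Pi i k * M.Pi j k := e2
      _ ≤ ∑ j, M.H i j := Finset.sum_le_sum fun j _ => h1 j
  -- bounds on the operator norm image
  have hub : ∀ y ∈ (fun v => enorm (M.H.mulVec v)) '' {v | sqnorm v ≤ 1},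
      y ≤ c9 * T2 := by
    rintro y ⟨v, hv, rfl⟩
    have hv1 : sqnorm v ≤ 1 := hv
    have hcs : ∀ i, (∑ j, M.H i j * v j) ^ 2 ≤ ∑ j, (M.H i j) ^ 2 := by
      intro i
      have h1 := Finset.sum_mul_sq_le_sq_mul_sq Finset.univ (fun j => M.H i j) v
      have h2 : (∑ j, (M.H i j) ^ 2) * (∑ j, v j ^ 2) ≤ (∑ j, (M.H i j) ^ 2) * 1 :=
        mul_le_mul_of_nonneg_left hv1 (Finset.sum_nonneg fun j _ => sq_nonneg _)
      calc (∑ j, M.H i j * v j) ^ 2 ≤ (∑ j, (M.H i j) ^ 2) * ∑ j, v j ^ 2 := h1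
        _ ≤ (∑ j, (M.H i j) ^ 2) * 1 := h2
        _ = ∑ j, (M.H i j) ^ 2 := mul_one _
    have hsq : sqnorm (M.H.mulVec v) ≤ (c9 * T2) ^ 2 := by
      have e4 : ∑ i, ∑ j, (c9 * (M.θ i * M.θ j)) ^ 2 = (c9 * T2) ^ 2 := by
        have e5 : ∀ i : Fin n, ∑ j, (c9 * (M.θ i * M.θ j)) ^ 2
            = c9 ^ 2 * M.θ i ^ 2 * T2 := by
          intro i
          rw [show (∑ j, (c9 * (M.θ i * M.θ j)) ^ 2)
              = ∑ j, c9 ^ 2 * M.θ i ^ 2 * M.θ j ^ 2 from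
            Finset.sum_congr rfl fun j _ => by ring, ← Finset.mul_sum]
        rw [Finset.sum_congr rfl fun i _ => e5 i, ← Finset.sum_mul, ← Finset.mul_sum,
          ← hT2def]
        ring
      calc sqnorm (M.H.mulVec v) = ∑ i, (∑ j, M.H i j * v j) ^ 2 := rfl
        _ ≤ ∑ i, ∑ j, (M.H i j) ^ 2 := Finset.sum_le_sum fun i _ => hcs i
        _ ≤ ∑ i, ∑ j, (c9 * (M.θ i * M.θ j)) ^ 2 :=
            Finset.sum_le_sum fun i _ => Finset.sum_le_sum fun j _ =>
              pow_le_pow_left₀ (hH0 i j) (hHub i j) 2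
        _ = (c9 * T2) ^ 2 := e4
    calc enorm (M.H.mulVec v) = Real.sqrt (sqnorm (M.H.mulVec v)) := rfl
      _ ≤ Real.sqrt ((c9 * T2) ^ 2) := Real.sqrt_le_sqrt hsq
      _ = c9 * T2 := Real.sqrt_sq (by positivity)
  have hzero_mem : (0 : ℝ) ∈ (fun v => enorm (M.H.mulVec v)) '' {v | sqnorm v ≤ 1} := by
    refine ⟨fun _ => 0, by simp [sqnorm], ?_⟩
    have : M.H.mulVec (fun _ => 0) = fun _ => 0 := by
      funext i; simp [Matrix.mulVec, dotProduct]
    simp [this, enorm, sqnorm]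
  have hne : ((fun v => enorm (M.H.mulVec v)) '' {v | sqnorm v ≤ 1}).Nonempty :=
    ⟨0, hzero_mem⟩
  have hbdd : BddAbove ((fun v => enorm (M.H.mulVec v)) '' {v | sqnorm v ≤ 1}) :=
    ⟨c9 * T2, fun y hy => hub y hy⟩
  constructor
  · -- the per-node bounds
    intro i
    have hn : 0 < n := i.pos
    have hn0 : (n : ℝ) ≠ 0 := Nat.cast_ne_zero.2 hn.ne'
    have hTbar : (n : ℝ) * M.θbar = T := by
      rw [Model.θbar, hT]; field_simp
    have hTbar2 : (n : ℝ) * M.θbar ^ 2 = T ^ 2 / n := by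
      rw [Model.θbar, hT]; field_simp
    have hθbar : 0 ≤ M.θbar :=
      div_nonneg (Finset.sum_nonneg fun i _ => (hθ i).le) (Nat.cast_nonneg n)
    have hdeg : M.deg i = (∑ j, M.H i j) + (1 / (n : ℝ)) * ∑ k, ∑ j, M.H k j := rfl
    have htot_lo : c1 * (T * T) ≤ ∑ k, ∑ j, M.H k j := by
      calc c1 * (T * T) = ∑ k, c1 * (T * M.θ k) := by
            rw [← Finset.mul_sum, ← Finset.mul_sum]
        _ ≤ ∑ k, ∑ j, M.H k j := Finset.sum_le_sum fun k _ => hrow_lo k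
    have hdeg_lo : c1 * ((n : ℝ) * M.θbar * M.θ i + (n : ℝ) * M.θbar ^ 2) ≤ M.deg i := by
      rw [hTbar, hTbar2]
      have h5 : (1 / (n : ℝ)) * (c1 * (T * T)) ≤ (1 / (n : ℝ)) * ∑ k, ∑ j, M.H k j :=
        mul_le_mul_of_nonneg_left htot_lo (by positivity)
      have h6 : c1 * (T * M.θ i + T ^ 2 / (n : ℝ))
          = c1 * (T * M.θ i) + (1 / (n : ℝ)) * (c1 * (T * T)) := by
        field_simp
      rw [hdeg, h6]
      exact add_le_add (hrow_lo i) h5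
    refine ⟨?_, ?_, hdeg_lo, ?_, ?_⟩
    · rw [hTbar]; exact hrow_lo i
    · rw [hTbar]; exact hrow_up i
    · refine le_trans ?_ hdeg_lo
      have ha : 0 ≤ (n : ℝ) * M.θbar * M.θ i :=
        mul_nonneg (mul_nonneg (Nat.cast_nonneg n) hθbar) (hθ i).le
      have hb : 0 ≤ (n : ℝ) * M.θbar ^ 2 :=
        mul_nonneg (Nat.cast_nonneg n) (sq_nonneg _)
      exact mul_le_mul_of_nonneg_left
        (max_le (le_add_of_nonneg_right hb) (le_add_of_nonneg_left ha)) hc1.le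
    · -- row ℓ² norm
      have hmax : ∀ j, M.θ j ≤ M.θmax :=
        fun j => le_ciSup (Set.Finite.bddAbove (Set.finite_range M.θ)) j
      have hmax0 : 0 ≤ M.θmax := (hθ i).le.trans (hmax i)
      have hsq : sqnorm (fun j => M.H i j) ≤ (n : ℝ) * (c9 * M.θmax * M.θ i) ^ 2 := by
        have h7 : ∀ j, (M.H i j) ^ 2 ≤ (c9 * M.θmax * M.θ i) ^ 2 := by
          intro j
          have h8 : M.H i j ≤ c9 * M.θmax * M.θ i := by
            have h9 := hHub i j
            nlinarith [h9, mul_nonneg (mul_nonneg hc9.le (hθ i).le)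
              (sub_nonneg.2 (hmax j))]
          exact pow_le_pow_left₀ (hH0 i j) h8 2
        calc sqnorm (fun j => M.H i j) = ∑ j, (M.H i j) ^ 2 := rfl
          _ ≤ ∑ _j : Fin n, (c9 * M.θmax * M.θ i) ^ 2 := Finset.sum_le_sum fun j _ => h7 j
          _ = (n : ℝ) * (c9 * M.θmax * M.θ i) ^ 2 := by
              rw [Finset.sum_const, Finset.card_univ, Fintype.card_fin, nsmul_eq_mul]
      calc enorm (fun j => M.H i j)
          = Real.sqrt (sqnorm (fun j => M.H i j)) := rfl
        _ ≤ Real.sqrt ((n : ℝ) * (c9 * M.θmax * M.θ i) ^ 2) := Real.sqrt_le_sqrt hsq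
        _ = Real.sqrt n * (c9 * M.θmax * M.θ i) := by
            rw [Real.sqrt_mul (Nat.cast_nonneg n),
              Real.sqrt_sq (mul_nonneg (mul_nonneg hc9.le hmax0) (hθ i).le)]
        _ = c9 * Real.sqrt n * M.θmax * M.θ i := by ring
  · -- operator norm bounds
    have hop_eq : opNorm M.H
        = sSup ((fun v => enorm (M.H.mulVec v)) '' {v | sqnorm v ≤ 1}) := rfl
    rcases Nat.eq_zero_or_pos n with h0 | hn
    · subst h0
      have hT2z : T2 = 0 := by simp [hT2def]
      constructor
      · have h10 := le_csSup hbdd hzero_mem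
        rw [hop_eq, hT2z]
        simpa using h10
      · rw [hop_eq]
        refine le_trans (csSup_le hne hub) ?_
        rw [hT2z]
        simp
    · -- n positive : K is bounded by 1/c1
      have hTpos : 0 < T := Finset.sum_pos (fun i _ => hθ i)
        (Finset.univ_nonempty_iff.2 (Fin.pos_iff_nonempty.1 hn))
      have hT2pos : 0 < T2 := Finset.sum_pos (fun i _ => pow_pos (hθ i) 2)
        (Finset.univ_nonempty_iff.2 (Fin.pos_iff_nonempty.1 hn))
      have hKpos : (0 : ℝ) < K := Nat.cast_pos.2 hK
      have hK1 : c1 * (K : ℝ) ≤ 1 := by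
        have hsum := Finset.sum_le_sum (fun k (_ : k ∈ Finset.univ) => hbal k)
        have e7 : ∑ _k : Fin K, c1 * T = (K : ℝ) * (c1 * T) := by
          rw [Finset.sum_const, Finset.card_univ, Fintype.card_fin, nsmul_eq_mul]
        have e8 : ∑ k, ∑ i, M.θ i * M.Pi i k = T := by
          rw [Finset.sum_comm]
          calc ∑ i, ∑ k, M.θ i * M.Pi i k = ∑ i, M.θ i * ∑ k, M.Pi i k :=
                Finset.sum_congr rfl fun i _ => (Finset.mul_sum _ _ _).symm
            _ = T := by
                refine Finset.sum_congr rfl fun i _ => ?_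
                rw [M.Pi_rowsum i, mul_one]
        rw [e7, e8] at hsum
        nlinarith
      constructor
      · -- lower bound on opNorm
        set s : ℝ := Real.sqrt T2 with hs
        have hspos : 0 < s := Real.sqrt_pos.2 hT2pos
        have hss : s * s = T2 := Real.mul_self_sqrt hT2pos.le
        set u : Fin n → ℝ := fun i => M.θ i / s with hu
        have hu1 : sqnorm u = 1 := by
          show (∑ i, u i ^ 2) = 1
          simp only [hu]
          have : ∀ i : Fin n, (M.θ i / s) ^ 2 = M.θ i ^ 2 / T2 := by
            intro i; rw [div_pow, hs, Real.sq_sqrt hT2pos.le]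
          rw [Finset.sum_congr rfl fun i _ => this i, ← Finset.sum_div]
          exact div_self hT2pos.ne'
        set Q : ℝ := ∑ i, ∑ j, M.H i j * (M.θ i * M.θ j) with hQdef
        have hQ : T2 ^ 2 / (K : ℝ) ≤ Q := by
          set w : Fin K → ℝ := fun k => ∑ i, M.θ i ^ 2 * M.Pi i k with hw
          have step1 : ∑ k, w k ^ 2 ≤ Q := by
            have e9 : ∀ i j : Fin n, M.θ i ^ 2 * M.θ j ^ 2 * ∑ k, M.Pi i k * M.Pi j k
                ≤ M.H i j * (M.θ i * M.θ j) := by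
              intro i j
              rw [hHe i j]
              have := mul_le_mul_of_nonneg_left (hSd i j)
                (mul_nonneg (sq_nonneg (M.θ i)) (sq_nonneg (M.θ j)))
              nlinarith [this]
            have e10 : ∑ k, w k ^ 2
                = ∑ i, ∑ j, M.θ i ^ 2 * M.θ j ^ 2 * ∑ k, M.Pi i k * M.Pi j k := by
              have e11 : ∀ k, w k ^ 2
                  = ∑ i, ∑ j, (M.θ i ^ 2 * M.Pi i k) * (M.θ j ^ 2 * M.Pi j k) := by
                intro k
                simp only [hw]
                rw [sq, Finset.sum_mul_sum]
              rw [Finset.sum_congr rfl fun k _ => e11 k]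
              rw [Finset.sum_comm]
              refine Finset.sum_congr rfl fun i _ => ?_
              rw [Finset.sum_comm]
              refine Finset.sum_congr rfl fun j _ => ?_
              rw [Finset.mul_sum]
              exact Finset.sum_congr rfl fun k _ => by ring
            rw [e10]
            exact Finset.sum_le_sum fun i _ => Finset.sum_le_sum fun j _ => e9 i j
          have step2 : T2 ^ 2 ≤ (K : ℝ) * ∑ k, w k ^ 2 := by
            have hcs2 := Finset.sum_mul_sq_le_sq_mul_sq Finset.univ
              (fun _ : Fin K => (1 : ℝ)) w
            have e12 : ∑ k, w k = T2 := by
              simp only [hw]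
              rw [Finset.sum_comm]
              calc ∑ i, ∑ k, M.θ i ^ 2 * M.Pi i k
                  = ∑ i, M.θ i ^ 2 * ∑ k, M.Pi i k :=
                    Finset.sum_congr rfl fun i _ => (Finset.mul_sum _ _ _).symm
                _ = T2 := by
                    refine Finset.sum_congr rfl fun i _ => ?_
                    rw [M.Pi_rowsum i, mul_one]
            simp only [one_mul, one_pow] at hcs2
            rw [e12] at hcs2
            calc T2 ^ 2 ≤ (∑ _k : Fin K, (1 : ℝ)) * ∑ k, w k ^ 2 := hcs2
              _ = (K : ℝ) * ∑ k, w k ^ 2 := by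
                  rw [Finset.sum_const, Finset.card_univ, Fintype.card_fin, nsmul_eq_mul,
                    mul_one]
          rw [div_le_iff₀ hKpos]
          calc T2 ^ 2 ≤ (K : ℝ) * ∑ k, w k ^ 2 := step2
            _ ≤ (K : ℝ) * Q := mul_le_mul_of_nonneg_left step1 hKpos.le
            _ = Q * (K : ℝ) := mul_comm _ _
        have hdotQ : (∑ i, M.H.mulVec u i * u i) = Q / T2 := by
          have e13 : ∀ i : Fin n, M.H.mulVec u i * u i
              = (∑ j, M.H i j * (M.θ i * M.θ j)) / T2 := by
            intro i
            show (∑ j, M.H i j * u j) * u i = _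
            rw [Finset.sum_mul, Finset.sum_div]
            refine Finset.sum_congr rfl fun j _ => ?_
            simp only [hu]
            rw [← hss]
            have hsne : s ≠ 0 := hspos.ne'
            field_simp
          rw [Finset.sum_congr rfl fun i _ => e13 i, ← Finset.sum_div, hQdef]
        have hdot_ge : T2 / (K : ℝ) ≤ ∑ i, M.H.mulVec u i * u i := by
          rw [hdotQ]
          rw [show T2 / (K : ℝ) = (T2 ^ 2 / (K : ℝ)) / T2 from by
            rw [div_div, sq]
            rw [mul_comm (K : ℝ) T2, ← div_div, mul_div_assoc,
              div_self hT2pos.ne', mul_one]]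
          gcongr
        have hdot0 : 0 ≤ ∑ i, M.H.mulVec u i * u i :=
          le_trans (by positivity) hdot_ge
        have hCS2 : (∑ i, M.H.mulVec u i * u i) ^ 2 ≤ sqnorm (M.H.mulVec u) := by
          have h14 := Finset.sum_mul_sq_le_sq_mul_sq Finset.univ (M.H.mulVec u) u
          have : (∑ i, (M.H.mulVec u i) ^ 2) * (∑ i, u i ^ 2)
              = sqnorm (M.H.mulVec u) := by
            rw [show (∑ i, u i ^ 2) = sqnorm u from rfl, hu1, mul_one]; rfl
          rw [this] at h14
          exact h14
        have henorm_ge : T2 / (K : ℝ) ≤ enorm (M.H.mulVec u) := by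
          refine le_trans hdot_ge ?_
          show _ ≤ Real.sqrt (sqnorm (M.H.mulVec u))
          exact Real.le_sqrt_of_sq_le hCS2
        have hmem : enorm (M.H.mulVec u)
            ∈ (fun v => enorm (M.H.mulVec v)) '' {v | sqnorm v ≤ 1} :=
          ⟨u, by rw [Set.mem_setOf_eq, hu1], rfl⟩
        rw [hop_eq, one_mul]
        exact le_trans henorm_ge (le_csSup hbdd hmem)
      · -- upper bound on opNorm
        rw [hop_eq]
        refine le_trans (csSup_le hne hub) ?_
        have e15 : (c9 / c1) * (T2 / (K : ℝ)) = (c9 * T2) / (c1 * (K : ℝ)) := by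
          field_simp
        rw [e15, le_div_iff₀ (by positivity)]
        nlinarith [hK1, mul_nonneg hc9.le hT20]
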